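/- arXiv:2011.06555 — 2 statements merged into one kernel-verified Lean document; each statement's English description precedes it below -/
import Mathlib

section
/- Suppose a state's votes in a given election are split into two districts, with district i receiving dᵢ Democratic votes and rᵢ Republican votes (all positive reals), and suppose the Democratic party wins both districts, i.e. dᵢ > rᵢ for i = 1, 2. Then the efficiency gap of the plan equals (3(r₁ + r₂) − (d₁ + d₂)) / (2(d₁ + d₂ + r₁ + r₂)). In particular, the efficiency gap depends only on the statewide totals D = d₁ + d₂ and R = r₁ + r₂ and not on how the votes are divided between the two districts: every two-district plan in which one party wins both seats has the same efficiency gap. -/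
/-- Democratic wasted votes in a district with `d` Democratic and `r` Republican votes:
the losing party wastes all of its votes, the winning party wastes its votes in excess
of half the district's total. -/
noncomputable def wastedDem (d r : ℝ) : ℝ := if d > r then d - (d + r) / 2 else d

/-- Republican wasted votes in a district with `d` Democratic and `r` Republican votes. -/
noncomputable def wastedRep (d r : ℝ) : ℝ := if r > d then r - (d + r) / 2 else r

/-- The efficiency gap of a two-district plan:
(total wasted Republican votes − total wasted Democratic votes) / (total votes). -/
noncomputable def effGap (d₁ r₁ d₂ r₂ : ℝ) : ℝ :=
  ((wastedRep d₁ r₁ + wastedRep d₂ r₂) - (wastedDem d₁ r₁ + wastedDem d₂ r₂)) /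
    (d₁ + d₂ + r₁ + r₂)

lemma effGap_eq (d₁ r₁ d₂ r₂ : ℝ) (hr₁ : 0 < r₁) (hr₂ : 0 < r₂)
    (hw₁ : d₁ > r₁) (hw₂ : d₂ > r₂) :
    effGap d₁ r₁ d₂ r₂ =
      (3 * (r₁ + r₂) - (d₁ + d₂)) / (2 * (d₁ + d₂ + r₁ + r₂)) := by
  unfold effGap wastedRep wastedDem
  rw [if_pos hw₁, if_pos hw₂, if_neg (not_lt.2 hw₁.le), if_neg (not_lt.2 hw₂.le)]
  have h : d₁ + d₂ + r₁ + r₂ ≠ 0 := ne_of_gt (by linarith)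
  field_simp
  ring

/-- If the Democratic party wins both districts of a two-district plan,
then the efficiency gap equals `(3(r₁ + r₂) − (d₁ + d₂)) / (2(d₁ + d₂ + r₁ + r₂))`.
In particular it depends only on the statewide totals `D = d₁ + d₂` and `R = r₁ + r₂`:
every two-district plan with the same totals in which the Democratic party wins both
seats has the same efficiency gap. -/
theorem effGap_dem_sweep (d₁ r₁ d₂ r₂ : ℝ)
    (hd₁ : 0 < d₁) (hr₁ : 0 < r₁) (hd₂ : 0 < d₂) (hr₂ : 0 < r₂)
    (hw₁ : d₁ > r₁) (hw₂ : d₂ > r₂) :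
    effGap d₁ r₁ d₂ r₂ =
        (3 * (r₁ + r₂) - (d₁ + d₂)) / (2 * (d₁ + d₂ + r₁ + r₂)) ∧
      ∀ d₁' r₁' d₂' r₂' : ℝ, 0 < d₁' → 0 < r₁' → 0 < d₂' → 0 < r₂' →
        d₁' > r₁' → d₂' > r₂' → d₁' + d₂' = d₁ + d₂ → r₁' + r₂' = r₁ + r₂ →
        effGap d₁' r₁' d₂' r₂' = effGap d₁ r₁ d₂ r₂ := by
  refine ⟨effGap_eq _ _ _ _ hr₁ hr₂ hw₁ hw₂, fun a b c e ha hb hc he h1 h2 hD hR => ?_⟩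
  rw [effGap_eq _ _ _ _ hb he h1 h2, effGap_eq _ _ _ _ hr₁ hr₂ hw₁ hw₂, hD, hR]
  have h : d₁ + d₂ + b + e = d₁ + d₂ + r₁ + r₂ := by linarith
  rw [h]
end

section
/- Suppose a state's votes in a given election are split into two districts of equal size, i.e. district i receives dᵢ Democratic votes and rᵢ Republican votes (all positive reals) with d₁ + r₁ = d₂ + r₂, and suppose each party wins exactly one district, say d₁ > r₁ and r₂ > d₂. Then the efficiency gap of the plan equals (R − D)/(R + D), where D = d₁ + d₂ and R = r₁ + r₂ are the statewide party totals. In particular, the efficiency gap depends only on the statewide totals and not on the particular division into districts, and it equals 0 if and only if the statewide vote is tied (D = R). -/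
lemma effGap_formula (d₁ r₁ d₂ r₂ : ℝ)
    (hd₁ : 0 < d₁) (hr₁ : 0 < r₁) (hd₂ : 0 < d₂) (hr₂ : 0 < r₂)
    (hsize : d₁ + r₁ = d₂ + r₂) (hw₁ : d₁ > r₁) (hw₂ : r₂ > d₂) :
    effGap d₁ r₁ d₂ r₂ = ((r₁ + r₂) - (d₁ + d₂)) / ((r₁ + r₂) + (d₁ + d₂)) := by
  have h1 : ¬ r₁ > d₁ := not_lt.mpr hw₁.le
  have h2 : ¬ d₂ > r₂ := not_lt.mpr hw₂.le
  unfold effGap wastedRep wastedDem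
  rw [if_neg h1, if_pos hw₂, if_pos hw₁, if_neg h2]
  have hnum : (r₁ + (r₂ - (d₂ + r₂) / 2)) - ((d₁ - (d₁ + r₁) / 2) + d₂)
      = (r₁ + r₂) - (d₁ + d₂) := by linarith
  rw [hnum]
  ring_nf

/-- In a two-district plan with equal-size districts
(`d₁ + r₁ = d₂ + r₂`) in which each party wins exactly one district
(`d₁ > r₁` and `r₂ > d₂`), the efficiency gap equals `(R − D)/(R + D)`, where
`D = d₁ + d₂` and `R = r₁ + r₂` are the statewide totals.  In particular it depends
only on the statewide totals and not on the particular division into districts, and it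
equals `0` if and only if the statewide vote is tied (`D = R`). -/
theorem effGap_split_seats (d₁ r₁ d₂ r₂ : ℝ)
    (hd₁ : 0 < d₁) (hr₁ : 0 < r₁) (hd₂ : 0 < d₂) (hr₂ : 0 < r₂)
    (hsize : d₁ + r₁ = d₂ + r₂) (hw₁ : d₁ > r₁) (hw₂ : r₂ > d₂) :
    effGap d₁ r₁ d₂ r₂ = ((r₁ + r₂) - (d₁ + d₂)) / ((r₁ + r₂) + (d₁ + d₂)) ∧
      (∀ d₁' r₁' d₂' r₂' : ℝ, 0 < d₁' → 0 < r₁' → 0 < d₂' → 0 < r₂' →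
        d₁' + r₁' = d₂' + r₂' → d₁' > r₁' → r₂' > d₂' →
        d₁' + d₂' = d₁ + d₂ → r₁' + r₂' = r₁ + r₂ →
        effGap d₁' r₁' d₂' r₂' = effGap d₁ r₁ d₂ r₂) ∧
      (effGap d₁ r₁ d₂ r₂ = 0 ↔ d₁ + d₂ = r₁ + r₂) := by
  have key := effGap_formula d₁ r₁ d₂ r₂ hd₁ hr₁ hd₂ hr₂ hsize hw₁ hw₂
  have hden : (r₁ + r₂) + (d₁ + d₂) > 0 := by linarith
  refine ⟨key, ?_, ?_⟩
  · intro a b c e ha hb hc he hs h1 h2 hD hR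
    rw [effGap_formula a b c e ha hb hc he hs h1 h2, key, hD, hR]
  · rw [key, div_eq_zero_iff]
    constructor
    · rintro (h | h) <;> linarith
    · intro h; left; linarith
end
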